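/- Let 0 ≤ γ < 1 and let Φ, Ψ be Young functions with Ψ^{−1}(t) = t^{−γ} Φ^{−1}(t) for all t > 0, and assume M_γ maps L^Φ(ℝ^n) boundedly into L^Ψ(ℝ^n) (which holds under this relation when 0 < γ < 1). Then there exist dimensional constants c_n, d_n with c_n d_n ≥ 1 and a constant c such that for every cube Q = Q(x,l) and every locally integrable f: ‖M_γ f‖_{L^Ψ_Q} ≤ c ‖f‖_{L^Φ_{2Q}} + c (1/Ψ^{−1}(1/|Q|)) sup_{t > c_n d_n l} (1/|Q(x,t)|^{1−γ}) ∫_{Q(x,t)} |f(z)| dz. -/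

import Mathlib

open MeasureTheory Set Real ENNReal Filter

noncomputable section

/-- The axis-parallel closed cube in `ℝⁿ` centered at `c` with side length `l`. -/
def cube (n : ℕ) (c : Fin n → ℝ) (l : ℝ) : Set (Fin n → ℝ) :=
  {y | ∀ i, |y i - c i| ≤ l / 2}

/-- The `ℝ≥0∞`-valued fractional maximal function `M_{γ,r} f`:
`sup_{Q ∋ x} |Q|^γ ((1/|Q|) ∫_Q |f|^r)^{1/r}`. -/
def fracMax (n : ℕ) (γ r : ℝ) (f : (Fin n → ℝ) → ℝ) (x : Fin n → ℝ) : ℝ≥0∞ :=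
  ⨆ (c : Fin n → ℝ) (l : ℝ) (_ : 0 < l) (_ : x ∈ cube n c l),
    volume (cube n c l) ^ γ *
      ((volume (cube n c l))⁻¹ * ∫⁻ y in cube n c l, ENNReal.ofReal |f y| ^ r) ^ (1 / r)

/-- The local sharp maximal function `M^♯_{0,s,Q₀} f (x)`, the supremum over
cubes `Q` with `x ∈ Q ⊆ Q₀` of `inf_c inf {α ≥ 0 : |{y ∈ Q : |f(y) - c| > α}| < s|Q|}`. -/
def localSharp (n : ℕ) (s : ℝ) (Q₀ : Set (Fin n → ℝ)) (f : (Fin n → ℝ) → ℝ)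
    (x : Fin n → ℝ) : ℝ≥0∞ :=
  ⨆ (c : Fin n → ℝ) (l : ℝ) (_ : 0 < l) (_ : x ∈ cube n c l) (_ : cube n c l ⊆ Q₀),
    ⨅ (a : ℝ), sInf {α : ℝ≥0∞ |
      volume {y ∈ cube n c l | α < ENNReal.ofReal |f y - a|} <
        ENNReal.ofReal s * volume (cube n c l)}

/-- `T` is of weak type `(r, q)`: `|{|Tf| > λ}| ≤ (C λ⁻¹ ‖f‖_{L^r})^q`. -/
def WeakType (n : ℕ) (T : ((Fin n → ℝ) → ℝ) → (Fin n → ℝ) → ℝ) (r q : ℝ) : Prop :=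
  ∃ C : ℝ, 0 < C ∧ ∀ (f : (Fin n → ℝ) → ℝ) (lam : ℝ), 0 < lam →
    volume {x | lam < |T f x|} ≤
      (ENNReal.ofReal (C / lam) * (∫⁻ y, ENNReal.ofReal |f y| ^ r) ^ (1 / r)) ^ q

/-- `cn` is a dimensional constant for which `|x-x'|/|x-y| ≤ cn 2^{-m}`
whenever `x, x' ∈ Q` and `y ∉ 2^m Q`. -/
def DimConst (n : ℕ) (cn : ℝ) : Prop :=
  0 < cn ∧ ∀ (c : Fin n → ℝ) (l : ℝ), 0 < l → ∀ m : ℕ, 1 ≤ m →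
    ∀ x x' y, x ∈ cube n c l → x' ∈ cube n c l → y ∉ cube n c (2 ^ m * l) →
      ‖x - x'‖ ≤ cn * 2 ^ (-(m : ℝ)) * ‖x - y‖

/-- Dini-type smoothness condition for the kernel `k` of a fractional type operator
of order `γ`, with modulus `ω`. -/
def DiniKernel (n : ℕ) (γ : ℝ) (k : (Fin n → ℝ) → (Fin n → ℝ) → ℝ)
    (ω : ℝ → ℝ) (cn : ℝ) : Prop :=
  (∀ ⦃s t : ℝ⦄, 0 < s → s ≤ t → ω s ≤ ω t) ∧ (∀ t, 0 < t → 0 ≤ ω t) ∧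
  IntegrableOn (fun t => ω (cn * t) / t) (Set.Ioo (0 : ℝ) 1) ∧
  ∃ C > 0, ∀ (c : Fin n → ℝ) (l : ℝ), 0 < l →
    ∀ x x' y, x ∈ cube n c l → x' ∈ cube n c l → y ∉ cube n c (2 * l) →
      |k x y - k x' y| ≤
        C * ‖x - y‖ ^ (-((n : ℝ) * (1 - γ))) * ω (‖x - x'‖ / ‖x - y‖)

/-- The (maximal) median of `g` over the cube `Q(c,l)` with parameter `t`. -/
def medianOn (n : ℕ) (g : (Fin n → ℝ) → ℝ) (t : ℝ) (c : Fin n → ℝ) (l : ℝ) : ℝ :=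
  sSup {M : ℝ | volume {y ∈ cube n c l | g y < M} ≤ ENNReal.ofReal t * volume (cube n c l)}

/-- `m♯_f(1-s, Q) = inf_a m_{|f-a|}(1-s, Q)`. -/
def sharpMedianOn (n : ℕ) (f : (Fin n → ℝ) → ℝ) (s : ℝ) (c : Fin n → ℝ) (l : ℝ) : ℝ :=
  ⨅ a : ℝ, medianOn n (fun y => |f y - a|) (1 - s) c l

/-- `Φ` satisfies condition `C`. -/
def CondC (Φ : ℝ → ℝ) : Prop :=
  Continuous Φ ∧ MonotoneOn Φ (Set.Ici 0) ∧ Φ 0 = 0 ∧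
    ∃ c > 0, ∀ t > 0, Φ (2 * t) ≤ c * Φ t

/-- A weight: nonnegative and locally integrable. -/
def IsWeight (n : ℕ) (w : (Fin n → ℝ) → ℝ) : Prop :=
  (∀ x, 0 ≤ w x) ∧ LocallyIntegrable w volume

/-- The pair of weights `(w, v)` satisfies condition `F`. -/
def CondF (n : ℕ) (w v : (Fin n → ℝ) → ℝ) : Prop :=
  ∃ c > 0, ∃ β > 0, ∃ α : ℝ, 0 < α ∧ α < 1 ∧
    ∀ (cc : Fin n → ℝ) (l : ℝ), 0 < l → ∀ E : Set (Fin n → ℝ),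
      MeasurableSet E → E ⊆ cube n cc l →
      volume E ≤ ENNReal.ofReal α * volume (cube n cc l) →
      ∫ x in E, w x ≤
        c * ((volume E).toReal / (volume (cube n cc l)).toReal) ^ β *
          ∫ x in cube n cc l \ E, v x

/-- A bounded, compactly supported, measurable function. -/
def NiceFun (n : ℕ) (f : (Fin n → ℝ) → ℝ) : Prop :=
  Measurable f ∧ HasCompactSupport f ∧ ∃ M : ℝ, ∀ x, |f x| ≤ M

/-- `m_g(t, Q₀) → 0` as the cubes `Q₀` increase to `ℝⁿ`. -/
def MedianTendstoZero (n : ℕ) (g : (Fin n → ℝ) → ℝ) (t : ℝ) : Prop :=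
  ∀ ε > 0, ∃ R > 0, ∀ (c : Fin n → ℝ) (l : ℝ), 0 < l →
    cube n (fun _ => 0) R ⊆ cube n c l → |medianOn n g t c l| < ε

/-- A Young function. -/
def IsYoung (Φ : ℝ → ℝ) : Prop :=
  ConvexOn ℝ (Set.Ici 0) Φ ∧ Continuous Φ ∧ MonotoneOn Φ (Set.Ici 0) ∧ Φ 0 = 0 ∧
  (∃ c > 0, ∀ t > 0, Φ (2 * t) ≤ c * Φ t) ∧
  Tendsto (fun t => Φ t / t) atTop atTop

/-- Generalized inverse of a Young function. -/
def youngInv (Φ : ℝ → ℝ) (t : ℝ) : ℝ :=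
  sInf {s : ℝ | 0 ≤ s ∧ t ≤ Φ s}

/-- The conjugate Young function `Ā(s) = sup_{t>0} (st - A(t))`. -/
def conjYoung (A : ℝ → ℝ) (s : ℝ) : ℝ :=
  sSup {v : ℝ | ∃ t > 0, v = s * t - A t}

/-- Unnormalized Luxemburg norm `‖f‖_{L^Φ_Q}`. -/
def luxNorm (n : ℕ) (Φ : ℝ → ℝ) (Q : Set (Fin n → ℝ)) (f : (Fin n → ℝ) → ℝ) : ℝ≥0∞ :=
  sInf {lam : ℝ≥0∞ | 0 < lam ∧
    ∫⁻ y in Q, ENNReal.ofReal (Φ (|f y| / lam.toReal)) ≤ 1}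

/-- Normalized Luxemburg average `‖f‖_{L^A(Q)}` (i.e. `(1/|Q|)∫_Q A(|f|/λ) ≤ 1`). -/
def luxAvg (n : ℕ) (A : ℝ → ℝ) (Q : Set (Fin n → ℝ)) (f : (Fin n → ℝ) → ℝ) : ℝ≥0∞ :=
  sInf {lam : ℝ≥0∞ | 0 < lam ∧
    ∫⁻ y in Q, ENNReal.ofReal (A (|f y| / lam.toReal)) ≤ volume Q}

/-- Luxemburg norm on all of `ℝⁿ`. -/
def luxNormGlobal (n : ℕ) (Φ : ℝ → ℝ) (f : (Fin n → ℝ) → ℝ) : ℝ≥0∞ :=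
  sInf {lam : ℝ≥0∞ | 0 < lam ∧
    ∫⁻ y, ENNReal.ofReal (Φ (|f y| / lam.toReal)) ≤ 1}

/-- Orlicz fractional maximal function `M_{γ,A} f(x) = sup_{Q ∋ x} |Q|^γ ‖f‖_{L^A(Q)}`. -/
def orliczMax (n : ℕ) (γ : ℝ) (A : ℝ → ℝ) (f : (Fin n → ℝ) → ℝ) (x : Fin n → ℝ) : ℝ≥0∞ :=
  ⨆ (c : Fin n → ℝ) (l : ℝ) (_ : 0 < l) (_ : x ∈ cube n c l),
    volume (cube n c l) ^ γ * luxAvg n A (cube n c l) f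

/-- Generalized Orlicz–Morrey norm `‖f‖_{𝓜^{Φ,φ}}`. -/
def morreyNorm (n : ℕ) (Φ : ℝ → ℝ) (φ : (Fin n → ℝ) → ℝ → ℝ) (f : (Fin n → ℝ) → ℝ) : ℝ≥0∞ :=
  ⨆ (x : Fin n → ℝ) (l : ℝ) (_ : 0 < l),
    ENNReal.ofReal ((1 / φ x l) * youngInv Φ (1 / (volume (cube n x l)).toReal)) *
      luxNorm n Φ (cube n x l) f

/-- Generalized Orlicz–Campanato seminorm `‖f‖_{𝓛^{Φ,φ}}`. -/
def campNorm (n : ℕ) (Φ : ℝ → ℝ) (φ : (Fin n → ℝ) → ℝ → ℝ) (f : (Fin n → ℝ) → ℝ) : ℝ≥0∞ :=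
  ⨆ (x : Fin n → ℝ) (l : ℝ) (_ : 0 < l),
    ENNReal.ofReal ((1 / φ x l) * youngInv Φ (1 / (volume (cube n x l)).toReal)) *
      ⨅ a : ℝ, luxNorm n Φ (cube n x l) (fun y => f y - a)

/-- The class `B_p` of Young functions. -/
def Bp (p : ℝ) (A : ℝ → ℝ) : Prop :=
  ∃ c > 0, IntegrableOn (fun t => A t / t ^ p / t) (Set.Ioi c)

/-- The class `B_{α,p}` of Cruz-Uribe and Moen (with `B_{0,p} = B_p`). -/
def Balphap (α p : ℝ) (A : ℝ → ℝ) : Prop :=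
  if α = 0 then Bp p A
  else ∃ c > 0,
    IntegrableOn (fun t => A t ^ ((1 / p - α)⁻¹ / p) / t ^ (1 / p - α)⁻¹ / t) (Set.Ioi c)

/-- The Riesz-potential-type integral `∫ |f(y)| |x-y|^{-n(1-γ)} dy`, valued in `ℝ≥0∞`. -/
def rieszPotential (n : ℕ) (γ : ℝ) (f : (Fin n → ℝ) → ℝ) (x : Fin n → ℝ) : ℝ≥0∞ :=
  ∫⁻ y, ENNReal.ofReal |f y| * ENNReal.ofReal (‖x - y‖ ^ (-((n : ℝ) * (1 - γ))))

end


section Helpers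

open scoped ENNReal

lemma cube_eq_pi (n : ℕ) (c : Fin n → ℝ) (l : ℝ) :
    cube n c l = Set.pi Set.univ (fun i => Set.Icc (c i - l / 2) (c i + l / 2)) := by
  ext y
  simp only [cube, Set.mem_setOf_eq, Set.mem_univ_pi, Set.mem_Icc]
  refine forall_congr' fun i => ?_
  rw [abs_le]
  constructor <;> intro h <;> constructor <;> linarith [h.1, h.2]

lemma measurableSet_cube (n : ℕ) (c : Fin n → ℝ) (l : ℝ) : MeasurableSet (cube n c l) := by
  rw [cube_eq_pi]
  exact MeasurableSet.univ_pi fun i => measurableSet_Icc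

lemma volume_cube (n : ℕ) (c : Fin n → ℝ) {l : ℝ} (hl : 0 ≤ l) :
    volume (cube n c l) = ENNReal.ofReal (l ^ n) := by
  rw [cube_eq_pi, volume_pi_pi]
  have h : ∀ i : Fin n, volume (Set.Icc (c i - l / 2) (c i + l / 2)) = ENNReal.ofReal l := by
    intro i; rw [Real.volume_Icc]; ring_nf
  simp only [h, Finset.prod_const, Finset.card_univ, Fintype.card_fin]
  exact (ENNReal.ofReal_pow hl n).symm

lemma lint_cmul_le {α : Type*} [MeasurableSpace α] (μ : MeasureTheory.Measure α) (r : ℝ≥0∞)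
    (hr : r ≠ ⊤) (h : α → ℝ≥0∞) : ∫⁻ z, r * h z ∂μ ≤ r * ∫⁻ z, h z ∂μ := by
  rcases eq_or_ne r 0 with h0 | h0
  · simp [h0]
  have h1 : r⁻¹ * ∫⁻ z, r * h z ∂μ ≤ ∫⁻ z, r⁻¹ * (r * h z) ∂μ :=
    lintegral_const_mul_le r⁻¹ _
  have h2 : ∫⁻ z, r⁻¹ * (r * h z) ∂μ = ∫⁻ z, h z ∂μ := by
    apply lintegral_congr; intro z
    rw [← mul_assoc, ENNReal.inv_mul_cancel h0 hr, one_mul]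
  rw [h2] at h1
  calc ∫⁻ z, r * h z ∂μ = r * (r⁻¹ * ∫⁻ z, r * h z ∂μ) := by
        rw [← mul_assoc, ENNReal.mul_inv_cancel h0 hr, one_mul]
    _ ≤ r * ∫⁻ z, h z ∂μ := mul_le_mul_right h1 _

lemma fracMax_mono (n : ℕ) (γ : ℝ) (f g : (Fin n → ℝ) → ℝ) (h : ∀ y, |f y| ≤ |g y|)
    (z : Fin n → ℝ) : fracMax n γ 1 f z ≤ fracMax n γ 1 g z := by
  refine iSup_le fun c => iSup_le fun m => iSup_le fun hm => iSup_le fun hz => ?_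
  refine le_iSup_of_le c (le_iSup_of_le m (le_iSup_of_le hm (le_iSup_of_le hz ?_)))
  refine mul_le_mul_right (ENNReal.rpow_le_rpow (mul_le_mul_right
    (lintegral_mono fun y => ?_) _) (by norm_num)) _
  exact ENNReal.rpow_le_rpow (ENNReal.ofReal_le_ofReal (h y)) zero_le_one

lemma fracMax_le_add (n : ℕ) (γ : ℝ) (f f₁ f₂ : (Fin n → ℝ) → ℝ)
    (hsplit : ∀ y, ENNReal.ofReal |f y| = ENNReal.ofReal |f₁ y| + ENNReal.ofReal |f₂ y|)
    (hmeas : AEMeasurable (fun y => ENNReal.ofReal |f₁ y|) volume) (z : Fin n → ℝ) :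
    fracMax n γ 1 f z ≤ fracMax n γ 1 f₁ z + fracMax n γ 1 f₂ z := by
  refine iSup_le fun c => iSup_le fun m => iSup_le fun hm => iSup_le fun hz => ?_
  have h1 : volume (cube n c m) ^ γ *
      ((volume (cube n c m))⁻¹ * ∫⁻ y in cube n c m, ENNReal.ofReal |f₁ y| ^ (1:ℝ)) ^ ((1:ℝ)/1)
      ≤ fracMax n γ 1 f₁ z :=
    le_iSup_of_le c (le_iSup_of_le m (le_iSup_of_le hm (le_iSup_of_le hz le_rfl)))
  have h2 : volume (cube n c m) ^ γ *
      ((volume (cube n c m))⁻¹ * ∫⁻ y in cube n c m, ENNReal.ofReal |f₂ y| ^ (1:ℝ)) ^ ((1:ℝ)/1)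
      ≤ fracMax n γ 1 f₂ z :=
    le_iSup_of_le c (le_iSup_of_le m (le_iSup_of_le hm (le_iSup_of_le hz le_rfl)))
  refine le_trans ?_ (add_le_add h1 h2)
  simp only [ENNReal.rpow_one, one_div_one]
  have hint : ∫⁻ y in cube n c m, ENNReal.ofReal |f y| =
      (∫⁻ y in cube n c m, ENNReal.ofReal |f₁ y|) + ∫⁻ y in cube n c m, ENNReal.ofReal |f₂ y| := by
    rw [← lintegral_add_left' hmeas.restrict]
    exact lintegral_congr fun y => hsplit y
  rw [hint, mul_add, mul_add]

lemma out_bound (n : ℕ) (γ : ℝ) (hγ0 : 0 ≤ γ) (hγ1 : γ < 1) (x : Fin n → ℝ) (l : ℝ)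
    (hl : 0 < l) (f : (Fin n → ℝ) → ℝ) (z : Fin n → ℝ) (hz : z ∈ cube n x l) :
    fracMax n γ 1 ((cube n x (2*l))ᶜ.indicator f) z ≤
      ENNReal.ofReal (4^n) * ⨆ (t : ℝ) (_ : l < t),
        volume (cube n x t) ^ (γ-1) * ∫⁻ w in cube n x t, ENNReal.ofReal |f w| := by
  refine iSup_le fun c => iSup_le fun m => iSup_le fun hm => iSup_le fun hzm => ?_
  by_cases hsub : cube n c m ⊆ cube n x (2*l)
  · have hzero : ∫⁻ y in cube n c m,
        ENNReal.ofReal |(cube n x (2*l))ᶜ.indicator f y| ^ (1:ℝ) = 0 := by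
      rw [setLIntegral_congr_fun (measurableSet_cube n c m)
        (fun y hy => ?_) (g := fun _ => 0), lintegral_zero]
      rw [Set.indicator_of_notMem (by simp [hsub hy])]
      simp
    rw [hzero]
    simp only [mul_zero]
    rw [ENNReal.zero_rpow_of_pos (by norm_num)]
    simp
  rw [Set.not_subset] at hsub
  obtain ⟨y, hyP, hy2Q⟩ := hsub
  have hlm : l < 2 * m := by
    simp only [cube, Set.mem_setOf_eq, not_forall, not_le] at hy2Q
    obtain ⟨i, hi⟩ := hy2Q
    have h1 := hz i
    have h2 := hzm i
    have h3 := hyP i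
    have h4 : |y i - x i| ≤ |y i - z i| + |z i - x i| := by
      calc |y i - x i| = |(y i - z i) + (z i - x i)| := by ring_nf
        _ ≤ _ := abs_add_le _ _
    have h5 : |y i - z i| ≤ |y i - c i| + |c i - z i| := by
      calc |y i - z i| = |(y i - c i) + (c i - z i)| := by ring_nf
        _ ≤ _ := abs_add_le _ _
    have h6 : |c i - z i| = |z i - c i| := abs_sub_comm _ _
    linarith
  set t := 2 * m + l with ht_def
  have ht : l < t := by linarith
  have htpos : 0 < t := by linarith
  have hPt : cube n c m ⊆ cube n x t := by
    intro w hw i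
    have h1 := hw i
    have h2 := hzm i
    have h3 := hz i
    have h4 : |w i - x i| ≤ |w i - c i| + |c i - z i| + |z i - x i| := by
      calc |w i - x i| = |(w i - c i) + (c i - z i) + (z i - x i)| := by ring_nf
        _ ≤ |(w i - c i) + (c i - z i)| + |z i - x i| := abs_add_le _ _
        _ ≤ |w i - c i| + |c i - z i| + |z i - x i| := by
            exact add_le_add_left (abs_add_le _ _) _
    have h6 : |c i - z i| = |z i - c i| := abs_sub_comm _ _
    rw [ht_def]; linarith
  have hVm : volume (cube n c m) = ENNReal.ofReal (m ^ n) := volume_cube n c hm.le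
  have hVt : volume (cube n x t) = ENNReal.ofReal (t ^ n) := volume_cube n x htpos.le
  have hmn : (0:ℝ) < m ^ n := pow_pos hm n
  have htn : (0:ℝ) < t ^ n := pow_pos htpos n
  have hI : (∫⁻ y in cube n c m,
        ENNReal.ofReal |(cube n x (2*l))ᶜ.indicator f y| ^ (1:ℝ)) ≤
      ∫⁻ w in cube n x t, ENNReal.ofReal |f w| := by
    refine lintegral_mono' (MeasureTheory.Measure.restrict_mono hPt le_rfl) fun y => ?_
    rw [ENNReal.rpow_one]
    refine ENNReal.ofReal_le_ofReal ?_
    by_cases h : y ∈ (cube n x (2*l))ᶜ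
    · rw [Set.indicator_of_mem h]
    · rw [Set.indicator_of_notMem h]; simp [abs_nonneg]
  have hreal : (m ^ n) ^ (γ - 1) ≤ 4 ^ n * (t ^ n) ^ (γ - 1) := by
    have h4m : t ≤ 4 * m := by linarith
    have h1 : (t ^ n) ^ (γ - 1) ≥ ((4 * m) ^ n) ^ (γ - 1) := by
      refine Real.rpow_le_rpow_of_nonpos htn (pow_le_pow_left₀ htpos.le h4m n) (by linarith)
    have h2 : ((4 * m) ^ n : ℝ) = 4 ^ n * m ^ n := by rw [mul_pow]
    have h3 : ((4:ℝ) ^ n * m ^ n) ^ (γ - 1) = ((4:ℝ)^n) ^ (γ - 1) * (m ^ n) ^ (γ - 1) :=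
      Real.mul_rpow (by positivity) (by positivity)
    have h5 : (1:ℝ) ≤ 4 ^ n * ((4:ℝ)^n) ^ (γ - 1) := by
      have hx : ((4:ℝ)^n) ^ ((1:ℝ) + (γ - 1)) = ((4:ℝ)^n) ^ (1:ℝ) * ((4:ℝ)^n) ^ (γ - 1) :=
        Real.rpow_add (by positivity) 1 (γ - 1)
      rw [Real.rpow_one, show (1:ℝ) + (γ - 1) = γ by ring] at hx
      rw [← hx]
      calc (1:ℝ) = ((4:ℝ)^n) ^ (0:ℝ) := by rw [Real.rpow_zero]
        _ ≤ ((4:ℝ)^n) ^ (γ:ℝ) := Real.rpow_le_rpow_of_exponent_le (one_le_pow₀ (by norm_num)) hγ0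
    calc (m ^ n : ℝ) ^ (γ - 1) = 1 * (m ^ n) ^ (γ - 1) := (one_mul _).symm
      _ ≤ (4 ^ n * ((4:ℝ)^n) ^ (γ - 1)) * (m ^ n) ^ (γ - 1) := by
          refine mul_le_mul_of_nonneg_right h5 (by positivity)
      _ = 4 ^ n * (((4:ℝ)^n) ^ (γ - 1) * (m ^ n) ^ (γ - 1)) := by ring
      _ = 4 ^ n * ((4 * m) ^ n) ^ (γ - 1) := by rw [h2, h3]
      _ ≤ 4 ^ n * (t ^ n) ^ (γ - 1) := by
          refine mul_le_mul_of_nonneg_left h1 (by positivity)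
  have hcoef : volume (cube n c m) ^ γ * (volume (cube n c m))⁻¹ ≤
      ENNReal.ofReal (4 ^ n) * volume (cube n x t) ^ (γ - 1) := by
    have e1 : volume (cube n c m) ^ γ * (volume (cube n c m))⁻¹ =
        volume (cube n c m) ^ (γ - 1) := by
      rw [show γ - 1 = γ + (-1) by ring,
        ENNReal.rpow_add γ (-1) (by rw [hVm]; simp [hmn, ENNReal.ofReal_pos.mpr hmn])
          (by rw [hVm]; exact ENNReal.ofReal_ne_top),
        ENNReal.rpow_neg_one]
    rw [e1, hVm, hVt, ENNReal.ofReal_rpow_of_pos hmn, ENNReal.ofReal_rpow_of_pos htn,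
      ← ENNReal.ofReal_mul (by positivity)]
    exact ENNReal.ofReal_le_ofReal hreal
  calc volume (cube n c m) ^ γ * ((volume (cube n c m))⁻¹ *
        ∫⁻ y in cube n c m, ENNReal.ofReal |(cube n x (2*l))ᶜ.indicator f y| ^ (1:ℝ)) ^ ((1:ℝ)/1)
      = (volume (cube n c m) ^ γ * (volume (cube n c m))⁻¹) *
        ∫⁻ y in cube n c m, ENNReal.ofReal |(cube n x (2*l))ᶜ.indicator f y| ^ (1:ℝ) := by
        rw [one_div_one, ENNReal.rpow_one, mul_assoc]
    _ ≤ (ENNReal.ofReal (4 ^ n) * volume (cube n x t) ^ (γ - 1)) *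
        ∫⁻ w in cube n x t, ENNReal.ofReal |f w| := mul_le_mul' hcoef hI
    _ = ENNReal.ofReal (4 ^ n) * (volume (cube n x t) ^ (γ - 1) *
        ∫⁻ w in cube n x t, ENNReal.ofReal |f w|) := by rw [mul_assoc]
    _ ≤ ENNReal.ofReal (4 ^ n) * ⨆ (t : ℝ) (_ : l < t),
        volume (cube n x t) ^ (γ-1) * ∫⁻ w in cube n x t, ENNReal.ofReal |f w| := by
        exact mul_le_mul_right (le_iSup₂ (f := fun (t : ℝ) (_ : l < t) =>
          volume (cube n x t) ^ (γ-1) * ∫⁻ w in cube n x t, ENNReal.ofReal |f w|) t ht) _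

lemma youngInv_spec (Ψ : ℝ → ℝ) (hΨ : IsYoung Ψ) (τ : ℝ) (hτ : 0 < τ) :
    0 < youngInv Ψ τ ∧ ∀ s, 0 ≤ s → s < youngInv Ψ τ → Ψ s < τ := by
  obtain ⟨hconv, hcont, hmono, h0, hdbl, htend⟩ := hΨ
  set T := {s : ℝ | 0 ≤ s ∧ τ ≤ Ψ s} with hT
  have hbdd : BddBelow T := ⟨0, fun s hs => hs.1⟩
  have hne : T.Nonempty := by
    obtain ⟨a, ha⟩ := eventually_atTop.mp (htend.eventually (eventually_ge_atTop τ))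
    set t := max a 1 with htdef
    have h1 : 1 ≤ t := le_max_right _ _
    have h2 : τ ≤ Ψ t / t := ha t (le_max_left _ _)
    have h3 : τ * t ≤ Ψ t := by
      rw [← le_div_iff₀ (by linarith)] at *
      exact h2
    refine ⟨t, by linarith, ?_⟩
    nlinarith
  have hmem : ∀ s, 0 ≤ s → s < sInf T → Ψ s < τ := by
    intro s hs hslt
    by_contra hc
    push_neg at hc
    exact absurd (csInf_le hbdd ⟨hs, hc⟩) (not_le.mpr hslt)
  refine ⟨?_, hmem⟩
  have hten : Tendsto Ψ (nhds 0) (nhds 0) := by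
    have := hcont.tendsto 0
    rwa [h0] at this
  have hev : ∀ᶠ s in nhds (0:ℝ), Ψ s < τ := hten.eventually_lt_const hτ
  obtain ⟨ε, hε, hball⟩ := Metric.eventually_nhds_iff.mp hev
  have hlow : ε / 2 ≤ sInf T := by
    refine le_csInf hne fun s hs => ?_
    by_contra hc
    push_neg at hc
    have : dist s 0 < ε := by
      rw [Real.dist_eq, sub_zero, abs_of_nonneg hs.1]; linarith
    exact absurd hs.2 (not_le.mpr (hball this))
  calc (0:ℝ) < ε / 2 := by linarith
    _ ≤ _ := hlow

lemma luxNorm_le_global (n : ℕ) (Φ : ℝ → ℝ) (Q : Set (Fin n → ℝ)) (f : (Fin n → ℝ) → ℝ) :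
    luxNorm n Φ Q f ≤ luxNormGlobal n Φ f := by
  refine sInf_le_sInf fun lam hlam => ⟨hlam.1, le_trans ?_ hlam.2⟩
  exact setLIntegral_le_lintegral _ _

lemma luxNormGlobal_indicator (n : ℕ) (Φ : ℝ → ℝ) (hΦ0 : Φ 0 = 0)
    (Q : Set (Fin n → ℝ)) (hQ : MeasurableSet Q) (f : (Fin n → ℝ) → ℝ) :
    luxNormGlobal n Φ (Q.indicator f) = luxNorm n Φ Q f := by
  unfold luxNormGlobal luxNorm
  congr 1
  ext lam
  simp only [Set.mem_setOf_eq, and_congr_right_iff]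
  intro _
  have key : ∫⁻ y, ENNReal.ofReal (Φ (|Q.indicator f y| / lam.toReal)) =
      ∫⁻ y in Q, ENNReal.ofReal (Φ (|f y| / lam.toReal)) := by
    rw [← lintegral_add_compl (fun y => ENNReal.ofReal (Φ (|Q.indicator f y| / lam.toReal))) hQ]
    have h1 : ∫⁻ y in Q, ENNReal.ofReal (Φ (|Q.indicator f y| / lam.toReal)) =
        ∫⁻ y in Q, ENNReal.ofReal (Φ (|f y| / lam.toReal)) := by
      refine setLIntegral_congr_fun hQ (fun y hy => ?_)
      rw [Set.indicator_of_mem hy]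
    have h2 : ∫⁻ y in Qᶜ, ENNReal.ofReal (Φ (|Q.indicator f y| / lam.toReal)) = 0 := by
      rw [setLIntegral_congr_fun hQ.compl (fun y hy => ?_) (g := fun _ => 0),
        lintegral_zero]
      rw [Set.indicator_of_notMem hy]
      simp [hΦ0]
    rw [h1, h2, add_zero]
  rw [key]

lemma luxNorm_congr_on (n : ℕ) (Φ : ℝ → ℝ) (Q : Set (Fin n → ℝ)) (hQ : MeasurableSet Q)
    (g g' : (Fin n → ℝ) → ℝ) (h : ∀ z ∈ Q, g z = g' z) :
    luxNorm n Φ Q g = luxNorm n Φ Q g' := by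
  unfold luxNorm
  congr 1
  ext lam
  simp only [Set.mem_setOf_eq, and_congr_right_iff]
  intro _
  rw [setLIntegral_congr_fun hQ (fun y hy => by rw [h y hy])]

lemma luxNorm_triangle_const (n : ℕ) (Ψ : ℝ → ℝ) (hconv : ConvexOn ℝ (Set.Ici 0) Ψ)
    (hmono : MonotoneOn Ψ (Set.Ici 0)) (h0 : Ψ 0 = 0)
    (Q : Set (Fin n → ℝ)) (hQ : MeasurableSet Q)
    (g g₁ : (Fin n → ℝ) → ℝ) (hg : ∀ z, 0 ≤ g z) (hg₁ : ∀ z, 0 ≤ g₁ z)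
    (b : ℝ) (hb : 0 < b) (hpt : ∀ z ∈ Q, g z ≤ g₁ z + b)
    (t2 : ℝ) (ht2 : 0 < t2) (hmem2 : ENNReal.ofReal (Ψ (b / t2)) * volume Q ≤ 1) :
    luxNorm n Ψ Q g ≤ luxNorm n Ψ Q g₁ + ENNReal.ofReal t2 := by
  have hΨnn : ∀ s : ℝ, 0 ≤ s → 0 ≤ Ψ s := fun s hs => by
    rw [← h0]; exact hmono (by simp) hs hs
  conv_rhs => rw [luxNorm]
  rw [ENNReal.sInf_add]
  refine le_iInf₂ fun lam hlam => ?_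
  rcases eq_or_ne lam ⊤ with rfl | hne
  · simp
  obtain ⟨hlpos, hlint⟩ := hlam
  set s := lam.toReal with hs_def
  have hs : 0 < s := ENNReal.toReal_pos hlpos.ne' hne
  set θ : ℝ := s / (s + t2) with hθ_def
  set θ' : ℝ := t2 / (s + t2) with hθ'_def
  have hst : 0 < s + t2 := by linarith
  have hθ : 0 ≤ θ := by positivity
  have hθ' : 0 ≤ θ' := by positivity
  have hθθ' : θ + θ' = 1 := by rw [hθ_def, hθ'_def]; field_simp
  refine sInf_le ⟨lt_of_lt_of_le hlpos le_self_add, ?_⟩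
  have htr : (lam + ENNReal.ofReal t2).toReal = s + t2 := by
    rw [ENNReal.toReal_add hne ENNReal.ofReal_ne_top, ENNReal.toReal_ofReal ht2.le]
  rw [htr]
  have hptwise : ∀ z ∈ Q, ENNReal.ofReal (Ψ (|g z| / (s + t2))) ≤
      ENNReal.ofReal θ * ENNReal.ofReal (Ψ (|g₁ z| / s)) +
        ENNReal.ofReal θ' * ENNReal.ofReal (Ψ (b / t2)) := by
    intro z hz
    have habs : |g z| = g z := abs_of_nonneg (hg z)
    have habs1 : |g₁ z| = g₁ z := abs_of_nonneg (hg₁ z)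
    have h1 : Ψ (|g z| / (s + t2)) ≤ Ψ ((g₁ z + b) / (s + t2)) := by
      refine hmono (by rw [habs]; exact div_nonneg (hg z) hst.le)
        (div_nonneg (by linarith [hg₁ z]) hst.le) ?_
      rw [habs]
      gcongr
      exact hpt z hz
    have h2 : Ψ ((g₁ z + b) / (s + t2)) ≤ θ * Ψ (g₁ z / s) + θ' * Ψ (b / t2) := by
      have hcomb : θ • (g₁ z / s) + θ' • (b / t2) = (g₁ z + b) / (s + t2) := by
        rw [smul_eq_mul, smul_eq_mul, hθ_def, hθ'_def]
        field_simp
      have := hconv.2 (x := g₁ z / s) (div_nonneg (hg₁ z) hs.le)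
        (y := b / t2) (div_nonneg hb.le ht2.le) hθ hθ' hθθ'
      rw [hcomb, smul_eq_mul, smul_eq_mul] at this
      exact this
    have hA : 0 ≤ Ψ (g₁ z / s) := hΨnn _ (div_nonneg (hg₁ z) hs.le)
    have hB : 0 ≤ Ψ (b / t2) := hΨnn _ (by positivity)
    calc ENNReal.ofReal (Ψ (|g z| / (s + t2)))
        ≤ ENNReal.ofReal (θ * Ψ (g₁ z / s) + θ' * Ψ (b / t2)) :=
          ENNReal.ofReal_le_ofReal (by linarith)
      _ = ENNReal.ofReal θ * ENNReal.ofReal (Ψ (|g₁ z| / s)) +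
          ENNReal.ofReal θ' * ENNReal.ofReal (Ψ (b / t2)) := by
          rw [ENNReal.ofReal_add (mul_nonneg hθ hA) (mul_nonneg hθ' hB),
            ENNReal.ofReal_mul hθ, ENNReal.ofReal_mul hθ', habs1]
  calc ∫⁻ y in Q, ENNReal.ofReal (Ψ (|g y| / (s + t2)))
      ≤ ∫⁻ y in Q, (ENNReal.ofReal θ * ENNReal.ofReal (Ψ (|g₁ y| / s)) +
          ENNReal.ofReal θ' * ENNReal.ofReal (Ψ (b / t2))) :=
        lintegral_mono_ae ((ae_restrict_iff' hQ).mpr (ae_of_all _ hptwise))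
    _ = (∫⁻ y in Q, ENNReal.ofReal θ * ENNReal.ofReal (Ψ (|g₁ y| / s))) +
        (ENNReal.ofReal θ' * ENNReal.ofReal (Ψ (b / t2))) * volume Q := by
        rw [lintegral_add_right _ measurable_const, lintegral_const,
          MeasureTheory.Measure.restrict_apply_univ]
    _ ≤ ENNReal.ofReal θ * (∫⁻ y in Q, ENNReal.ofReal (Ψ (|g₁ y| / s))) +
        ENNReal.ofReal θ' * (ENNReal.ofReal (Ψ (b / t2)) * volume Q) :=
        add_le_add (lint_cmul_le _ _ ENNReal.ofReal_ne_top _) (le_of_eq (mul_assoc _ _ _))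
    _ ≤ ENNReal.ofReal θ * 1 + ENNReal.ofReal θ' * 1 :=
        add_le_add (mul_le_mul_right hlint _) (mul_le_mul_right hmem2 _)
    _ = ENNReal.ofReal (θ + θ') := by rw [mul_one, mul_one, ENNReal.ofReal_add hθ hθ']
    _ = 1 := by rw [hθθ']; simp

end Helpers

/-- Proposition 5.1 (i): `‖M_γ f‖_{L^Ψ_Q} ≤ c ‖f‖_{L^Φ_{2Q}} +
c (1/Ψ⁻¹(1/|Q|)) sup_{t > cₙdₙ l} (1/|Q(x,t)|^{1-γ}) ∫_{Q(x,t)} |f|`. -/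


theorem orlicz_local_estimate_fracMax_i
    (n : ℕ) (hn : 1 ≤ n) (γ : ℝ) (hγ0 : 0 ≤ γ) (hγ1 : γ < 1)
    (Φ Ψ : ℝ → ℝ) (hΦ : IsYoung Φ) (hΨ : IsYoung Ψ)
    (hinv : ∀ t : ℝ, 0 < t → youngInv Ψ t = t ^ (-γ) * youngInv Φ t)
    (hbdd : ∃ C : ℝ, 0 < C ∧ ∀ f : (Fin n → ℝ) → ℝ,
      luxNormGlobal n Ψ (fun x => (fracMax n γ 1 f x).toReal) ≤
        ENNReal.ofReal C * luxNormGlobal n Φ f) :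
    ∃ cn dn : ℝ, 0 < cn ∧ 0 < dn ∧ 1 ≤ cn * dn ∧ ∃ c : ℝ, 0 < c ∧
      ∀ (x : Fin n → ℝ) (l : ℝ), 0 < l →
        ∀ f : (Fin n → ℝ) → ℝ, LocallyIntegrable f volume →
          luxNorm n Ψ (cube n x l) (fun z => (fracMax n γ 1 f z).toReal) ≤
            ENNReal.ofReal c * luxNorm n Φ (cube n x (2 * l)) f +
              ENNReal.ofReal
                  (c * (1 / youngInv Ψ (1 / (volume (cube n x l)).toReal))) *
                ⨆ (t : ℝ) (_ : cn * dn * l < t),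
                  volume (cube n x t) ^ (γ - 1) *
                    ∫⁻ z in cube n x t, ENNReal.ofReal |f z| := by
  obtain ⟨C, hC, hbddC⟩ := hbdd
  refine ⟨1, 1, one_pos, one_pos, by norm_num, C + 2 * 4 ^ n + 1, by positivity, ?_⟩
  intro x l hl f hf
  rw [show (1:ℝ) * 1 * l = l by ring]
  set cc : ℝ := C + 2 * 4 ^ n + 1 with hcc_def
  have hccpos : 0 < cc := by positivity
  set Q2 := cube n x (2 * l) with hQ2_def
  set f₁ := Q2.indicator f with hf₁_def
  set f₂ := Q2ᶜ.indicator f with hf₂_def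
  set S := ⨆ (t : ℝ) (_ : l < t),
      volume (cube n x t) ^ (γ - 1) * ∫⁻ z in cube n x t, ENNReal.ofReal |f z| with hS_def
  have hQ2meas : MeasurableSet Q2 := measurableSet_cube n x (2 * l)
  have hQmeas : MeasurableSet (cube n x l) := measurableSet_cube n x l
  have hvol : volume (cube n x l) = ENNReal.ofReal (l ^ n) := volume_cube n x hl.le
  have hln : (0:ℝ) < l ^ n := pow_pos hl n
  have hvtoReal : (volume (cube n x l)).toReal = l ^ n := by
    rw [hvol, ENNReal.toReal_ofReal hln.le]
  set u := youngInv Ψ (1 / (volume (cube n x l)).toReal) with hu_def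
  have hτ : (0:ℝ) < 1 / l ^ n := by positivity
  obtain ⟨hu, hkey⟩ : 0 < u ∧ ∀ s, 0 ≤ s → s < u → Ψ s < 1 / l ^ n := by
    rw [hu_def, hvtoReal]
    exact youngInv_spec Ψ hΨ (1 / l ^ n) hτ
  -- first-term estimate
  have hglob1 : luxNorm n Ψ (cube n x l) (fun z => (fracMax n γ 1 f₁ z).toReal) ≤
      ENNReal.ofReal C * luxNorm n Φ Q2 f := by
    calc luxNorm n Ψ (cube n x l) (fun z => (fracMax n γ 1 f₁ z).toReal)
        ≤ luxNormGlobal n Ψ (fun z => (fracMax n γ 1 f₁ z).toReal) := luxNorm_le_global _ _ _ _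
      _ ≤ ENNReal.ofReal C * luxNormGlobal n Φ f₁ := hbddC f₁
      _ = ENNReal.ofReal C * luxNorm n Φ Q2 f := by
          rw [hf₁_def, luxNormGlobal_indicator n Φ hΦ.2.2.2.1 Q2 hQ2meas f]
  -- split facts
  have hsplit : ∀ y, ENNReal.ofReal |f y| = ENNReal.ofReal |f₁ y| + ENNReal.ofReal |f₂ y| := by
    intro y
    by_cases hy : y ∈ Q2
    · rw [hf₁_def, hf₂_def, Set.indicator_of_mem hy, Set.indicator_of_notMem (by simp [hy])]
      simp
    · rw [hf₁_def, hf₂_def, Set.indicator_of_notMem hy, Set.indicator_of_mem (by simp [hy])]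
      simp
  have hfm : AEMeasurable f volume := hf.aestronglyMeasurable.aemeasurable
  have hmeas1 : AEMeasurable (fun y => ENNReal.ofReal |f₁ y|) volume := by
    exact ENNReal.measurable_ofReal.comp_aemeasurable
      (measurable_abs.comp_aemeasurable (hfm.indicator hQ2meas))
  have habs1 : ∀ y, |f₁ y| ≤ |f y| := by
    intro y
    by_cases hy : y ∈ Q2
    · rw [hf₁_def, Set.indicator_of_mem hy]
    · rw [hf₁_def, Set.indicator_of_notMem hy]; simp [abs_nonneg]
  have hf2bound : ∀ z ∈ cube n x l, fracMax n γ 1 f₂ z ≤ ENNReal.ofReal (4 ^ n) * S :=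
    fun z hz => out_bound n γ hγ0 hγ1 x l hl f z hz
  rcases eq_or_ne S ⊤ with hST | hST
  · have hne0 : ENNReal.ofReal (cc * (1 / u)) ≠ 0 :=
      (ENNReal.ofReal_pos.mpr (by positivity)).ne'
    rw [hST, ENNReal.mul_top hne0, add_top]
    exact le_top
  rcases eq_or_lt_of_le (show (0:ℝ) ≤ 4 ^ n * S.toReal by positivity) with hb0 | hb0
  · -- S.toReal = 0, hence S = 0 and fracMax f = fracMax f₁ on the cube
    have hS0 : S = 0 := by
      have h1 : S.toReal = 0 := by
        by_contra hc
        have : (0:ℝ) < 4 ^ n * S.toReal := by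
          have := ENNReal.toReal_nonneg (a := S)
          have h2 : 0 < S.toReal := lt_of_le_of_ne this (Ne.symm hc)
          positivity
        linarith [hb0]
      exact (ENNReal.toReal_eq_zero_iff S).mp h1 |>.resolve_right hST
    have heq : ∀ z ∈ cube n x l,
        (fracMax n γ 1 f z).toReal = (fracMax n γ 1 f₁ z).toReal := by
      intro z hz
      have h2 : fracMax n γ 1 f₂ z = 0 := by
        have := hf2bound z hz
        rw [hS0, mul_zero] at this
        exact le_antisymm this (zero_le)
      have hle : fracMax n γ 1 f z ≤ fracMax n γ 1 f₁ z := by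
        have := fracMax_le_add n γ f f₁ f₂ hsplit hmeas1 z
        rwa [h2, add_zero] at this
      have hge : fracMax n γ 1 f₁ z ≤ fracMax n γ 1 f z := fracMax_mono n γ f₁ f habs1 z
      rw [le_antisymm hle hge]
    calc luxNorm n Ψ (cube n x l) (fun z => (fracMax n γ 1 f z).toReal)
        = luxNorm n Ψ (cube n x l) (fun z => (fracMax n γ 1 f₁ z).toReal) :=
          luxNorm_congr_on n Ψ (cube n x l) hQmeas _ _ heq
      _ ≤ ENNReal.ofReal C * luxNorm n Φ Q2 f := hglob1
      _ ≤ ENNReal.ofReal cc * luxNorm n Φ Q2 f := by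
          have h4 : (0:ℝ) < 4 ^ n := by positivity
          exact mul_le_mul_left (ENNReal.ofReal_le_ofReal (by rw [hcc_def]; linarith)) _
      _ ≤ _ := le_add_right le_rfl
  -- main case : 0 < b
  set b : ℝ := 4 ^ n * S.toReal with hb_def
  have hf2fin : ENNReal.ofReal (4 ^ n) * S ≠ ⊤ :=
    (ENNReal.mul_lt_top ENNReal.ofReal_lt_top hST.lt_top).ne
  have hpt : ∀ z ∈ cube n x l,
      (fracMax n γ 1 f z).toReal ≤ (fracMax n γ 1 f₁ z).toReal + b := by
    intro z hz
    rcases eq_or_ne (fracMax n γ 1 f z) ⊤ with htop | hfin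
    · rw [htop]
      simp only [ENNReal.toReal_top]
      have : (0:ℝ) ≤ (fracMax n γ 1 f₁ z).toReal := ENNReal.toReal_nonneg
      linarith
    · have hadd := fracMax_le_add n γ f f₁ f₂ hsplit hmeas1 z
      have h2 := hf2bound z hz
      have hchain : fracMax n γ 1 f z ≤ fracMax n γ 1 f₁ z + ENNReal.ofReal (4 ^ n) * S :=
        hadd.trans (add_le_add_right h2 _)
      have h1fin : fracMax n γ 1 f₁ z ≠ ⊤ :=
        ne_top_of_le_ne_top hfin (fracMax_mono n γ f₁ f habs1 z)
      have := ENNReal.toReal_mono (by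
        exact ENNReal.add_ne_top.mpr ⟨h1fin, hf2fin⟩) hchain
      rwa [ENNReal.toReal_add h1fin hf2fin, ENNReal.toReal_mul,
        ENNReal.toReal_ofReal (by positivity : (0:ℝ) ≤ 4 ^ n)] at this
  set t2 : ℝ := 2 * b / u with ht2_def
  have ht2 : 0 < t2 := by rw [ht2_def]; positivity
  have hmem2 : ENNReal.ofReal (Ψ (b / t2)) * volume (cube n x l) ≤ 1 := by
    have hbt : b / t2 = u / 2 := by
      rw [ht2_def]
      field_simp
    have hΨlt : Ψ (u / 2) < 1 / l ^ n := hkey (u / 2) (by positivity) (by linarith)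
    have hΨnn : 0 ≤ Ψ (u / 2) := by
      rw [← hΨ.2.2.2.1]
      exact hΨ.2.2.1 (by simp) (by simp; positivity) (by positivity)
    rw [hbt, hvol, ← ENNReal.ofReal_mul hΨnn]
    calc ENNReal.ofReal (Ψ (u / 2) * l ^ n) ≤ ENNReal.ofReal ((1 / l ^ n) * l ^ n) :=
          ENNReal.ofReal_le_ofReal (by nlinarith)
      _ = 1 := by rw [one_div, inv_mul_cancel₀ hln.ne']; exact ENNReal.ofReal_one
  have htri := luxNorm_triangle_const n Ψ hΨ.1 hΨ.2.2.1 hΨ.2.2.2.1 (cube n x l) hQmeas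
    (fun z => (fracMax n γ 1 f z).toReal) (fun z => (fracMax n γ 1 f₁ z).toReal)
    (fun z => ENNReal.toReal_nonneg) (fun z => ENNReal.toReal_nonneg)
    b hb0 hpt t2 ht2 hmem2
  refine htri.trans (add_le_add ?_ ?_)
  · have h4 : (0:ℝ) < 4 ^ n := by positivity
    exact hglob1.trans (mul_le_mul_left
      (ENNReal.ofReal_le_ofReal (by rw [hcc_def]; linarith)) _)
  · have he : ENNReal.ofReal t2 = ENNReal.ofReal (2 * 4 ^ n * (1 / u)) * S := by
      rw [ht2_def, hb_def, show 2 * (4 ^ n * S.toReal) / u = (2 * 4 ^ n * (1 / u)) * S.toReal by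
        field_simp, ENNReal.ofReal_mul (by positivity), ENNReal.ofReal_toReal hST]
    rw [he]
    refine mul_le_mul_left (ENNReal.ofReal_le_ofReal ?_) _
    have h1u : 0 ≤ 1 / u := by positivity
    have : 2 * 4 ^ n ≤ cc := by rw [hcc_def]; linarith
    nlinarith
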